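/- arXiv:1001.4790 — 3 statements merged into one kernel-verified Lean document; each statement's English description precedes it below -/
import Mathlib

section
/- Let h(w) ∈ ℚ[w, w⁻¹] be a Laurent polynomial such that h(k) ∈ ℤ[1/k] for every nonzero integer k. Then there exists m ≥ 0 such that wᵐ·h(w) is a ℤ-linear combination of the binomial polynomials P_i(t) = t(t-1)⋯(t-(i-1))/i!, i ≥ 0. -/
open Polynomial

/-- The binomial polynomial `P_i(t) = t(t-1)⋯(t-(i-1))/i!` in `ℚ[t]` (`P_0 = 1`). -/
noncomputable def binomialPoly (i : ℕ) : Polynomial ℚ :=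
  Polynomial.C ((i.factorial : ℚ)⁻¹) * ∏ j ∈ Finset.range i, (Polynomial.X - Polynomial.C (j : ℚ))

/-- Evaluation of a Laurent polynomial over `ℚ` at a rational number. -/
noncomputable def laurentEval (f : LaurentPolynomial ℚ) (q : ℚ) : ℚ :=
  Finsupp.sum (AddMonoidAlgebra.coeff f) fun n c => c * q ^ n

/-- The finite-difference operator `p ↦ p(X+1) - p(X)` as an additive homomorphism. -/
noncomputable def dltHom : Polynomial ℚ →+ Polynomial ℚ where
  toFun p := p.comp (X + 1) - p
  map_zero' := by simp
  map_add' a b := by simp only [add_comp]; ring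

lemma dlt_apply (p : ℚ[X]) : dltHom p = p.comp (X + 1) - p := rfl

lemma binomialPoly_zero : binomialPoly 0 = 1 := by
  simp [binomialPoly]

lemma dlt_binom (i : ℕ) : dltHom (binomialPoly (i + 1)) = binomialPoly i := by
  have hcomp : (∏ j ∈ Finset.range (i + 1), (X - C (j : ℚ))).comp (X + 1)
      = (∏ j ∈ Finset.range i, (X - C (j : ℚ))) * (X + 1) := by
    rw [Polynomial.prod_comp]
    simp only [sub_comp, X_comp, C_comp]
    rw [Finset.prod_range_succ']
    congr 1
    · refine Finset.prod_congr rfl fun j _ => ?_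
      push_cast
      rw [C_add, C_1]
      ring
    · simp
  rw [dlt_apply]
  unfold binomialPoly
  rw [mul_comp, C_comp, hcomp, Finset.prod_range_succ]
  have hC : C (((i + 1).factorial : ℚ)⁻¹) * (C (i : ℚ) + 1) = C ((i.factorial : ℚ)⁻¹) := by
    rw [← C_1, ← C_add, ← C_mul]
    congr 1
    rw [Nat.factorial_succ]
    have h1 : ((i : ℚ) + 1) ≠ 0 := by positivity
    have h2 : ((i.factorial : ℚ)) ≠ 0 := by
      exact_mod_cast Nat.factorial_ne_zero i
    push_cast
    field_simp
  calc C (((i + 1).factorial : ℚ)⁻¹) * ((∏ j ∈ Finset.range i, (X - C (j : ℚ))) * (X + 1))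
        - C (((i + 1).factorial : ℚ)⁻¹) *
          ((∏ j ∈ Finset.range i, (X - C (j : ℚ))) * (X - C (i : ℚ)))
      = (C (((i + 1).factorial : ℚ)⁻¹) * (C (i : ℚ) + 1)) *
          ∏ j ∈ Finset.range i, (X - C (j : ℚ)) := by ring
    _ = C ((i.factorial : ℚ)⁻¹) * ∏ j ∈ Finset.range i, (X - C (j : ℚ)) := by rw [hC]

lemma eq_of_dlt {p q : ℚ[X]} (h1 : dltHom p = dltHom q) (h2 : p.eval 0 = q.eval 0) :
    p = q := by
  have hr : (p - q).comp (X + 1) = p - q := by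
    simp only [dlt_apply] at h1
    rw [sub_comp]
    linear_combination h1
  have hn : ∀ m : ℕ, (p - q).eval (m : ℚ) = 0 := by
    intro m
    induction m with
    | zero => simp [h2]
    | succ m ih =>
      have he : (p - q).eval ((m : ℚ) + 1) = ((p - q).comp (X + 1)).eval (m : ℚ) := by
        rw [eval_comp]; simp
      push_cast
      rw [he, hr, ih]
  have hz : p - q = 0 := by
    apply Polynomial.eq_zero_of_infinite_isRoot
    apply Set.infinite_of_injective_forall_mem (f := fun m : ℕ => (m : ℚ))
      Nat.cast_injective
    intro m
    exact hn m
  exact sub_eq_zero.mp hz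

lemma binom_eval_zero (i : ℕ) : (binomialPoly (i + 1)).eval 0 = 0 := by
  unfold binomialPoly
  rw [eval_mul, eval_prod]
  rw [Finset.prod_eq_zero (Finset.mem_range.mpr (Nat.succ_pos i)) (by simp)]
  ring

lemma dlt_binom_zero : dltHom (binomialPoly 0) = 0 := by
  rw [binomialPoly_zero, dlt_apply]
  simp

/-- An integer-valued polynomial is a `ℤ`-linear combination of binomial polynomials. -/
lemma intval_rep : ∀ n : ℕ, ∀ p : ℚ[X], p.natDegree ≤ n →
    (∀ k : ℤ, ∃ z : ℤ, p.eval (k : ℚ) = z) →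
    ∃ c : ℕ →₀ ℤ, p = c.sum fun i z => z • binomialPoly i := by
  intro n
  induction n with
  | zero =>
    intro p hd hv
    obtain ⟨a, rfl⟩ := Polynomial.natDegree_eq_zero.mp (Nat.le_zero.mp hd)
    obtain ⟨z, hz⟩ := hv 0
    simp only [Int.cast_zero, eval_C] at hz
    refine ⟨Finsupp.single 0 z, ?_⟩
    rw [Finsupp.sum_single_index (by simp)]
    rw [binomialPoly_zero, hz]
    simp [zsmul_eq_mul]
  | succ n ih =>
    intro p hd hv
    by_cases h0 : dltHom p = 0
    · obtain ⟨z, hz⟩ := hv 0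
      simp only [Int.cast_zero] at hz
      refine ⟨Finsupp.single 0 z, ?_⟩
      rw [Finsupp.sum_single_index (by simp)]
      apply eq_of_dlt
      · rw [h0, map_zsmul, dlt_binom_zero, smul_zero]
      · rw [hz, binomialPoly_zero]
        simp [zsmul_eq_mul]
    · have hp0 : p ≠ 0 := by
        rintro rfl
        simp at h0
      have hdX : (X + 1 : ℚ[X]).natDegree = 1 := by
        rw [← C_1]
        exact natDegree_X_add_C (1 : ℚ)
      have hndc : (p.comp (X + 1)).natDegree = p.natDegree := by
        rw [natDegree_comp, hdX, mul_one]
      have hlcX : (X + 1 : ℚ[X]).leadingCoeff = 1 := by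
        rw [← C_1]
        exact monic_X_add_C (1 : ℚ)
      have hlc : (p.comp (X + 1)).leadingCoeff = p.leadingCoeff := by
        rw [leadingCoeff_comp (by rw [hdX]; exact one_ne_zero), hlcX, one_pow, mul_one]
      have hc0 : p.comp (X + 1) ≠ 0 := by
        intro hzero
        apply hp0
        rw [← leadingCoeff_eq_zero, ← hlc, hzero, leadingCoeff_zero]
      have hdeg : (p.comp (X + 1)).degree = p.degree := by
        rw [degree_eq_natDegree hc0, degree_eq_natDegree hp0, hndc]
      have hlt : (dltHom p).degree < p.degree := by
        have := Polynomial.degree_sub_lt hdeg hc0 hlc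
        rw [hdeg] at this
        exact this
      have hnlt : (dltHom p).natDegree < p.natDegree :=
        Polynomial.natDegree_lt_natDegree h0 hlt
      have hvd : ∀ k : ℤ, ∃ z : ℤ, (dltHom p).eval (k : ℚ) = z := by
        intro k
        obtain ⟨z1, h1⟩ := hv (k + 1)
        obtain ⟨z2, h2⟩ := hv k
        refine ⟨z1 - z2, ?_⟩
        rw [dlt_apply, eval_sub, eval_comp]
        simp only [eval_add, eval_X, eval_one]
        push_cast at h1 ⊢
        rw [h1, h2]
      obtain ⟨c, hc⟩ := ih (dltHom p) (by omega) hvd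
      obtain ⟨z0, hz0⟩ := hv 0
      simp only [Int.cast_zero] at hz0
      set c' := c.embDomain ⟨Nat.succ, Nat.succ_injective⟩ + Finsupp.single 0 z0 with hc'def
      refine ⟨c', ?_⟩
      have hsum : (c'.sum fun i z => z • binomialPoly i)
          = (c.sum fun i z => z • binomialPoly (i + 1)) + z0 • binomialPoly 0 := by
        rw [hc'def, Finsupp.sum_add_index (by simp) (by intro a _ b1 b2; exact add_smul _ _ _)]
        rw [Finsupp.sum_embDomain, Finsupp.sum_single_index (by simp)]
        rfl
      apply eq_of_dlt
      · rw [hsum, map_add, map_zsmul, dlt_binom_zero, smul_zero, add_zero]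
        rw [map_finsuppSum]
        rw [hc]
        exact Finsupp.sum_congr fun i _ => by rw [map_zsmul, dlt_binom]
      · rw [hsum, eval_add]
        have he1 : (c.sum fun i z => z • binomialPoly (i + 1)).eval 0 = 0 := by
          rw [Finsupp.sum, eval_finset_sum]
          apply Finset.sum_eq_zero
          intro i _
          rw [eval_smul, binom_eval_zero, smul_zero]
        rw [he1, zero_add, eval_smul, binomialPoly_zero, eval_one, hz0]
        simp

/-- Evaluation of Laurent polynomials at a nonzero rational, as a ring homomorphism. -/
noncomputable def levalHom (u : ℚˣ) : LaurentPolynomial ℚ →+* ℚ :=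
  AddMonoidAlgebra.liftNCRingHom (RingHom.id ℚ) ((Units.coeHom ℚ).comp (zpowersHom ℚˣ u))
    fun _ _ => Commute.all _ _

lemma levalHom_single (u : ℚˣ) (n : ℤ) (c : ℚ) :
    levalHom u (AddMonoidAlgebra.single n c) = c * (u : ℚ) ^ n := by
  show AddMonoidAlgebra.liftNC _ _ (AddMonoidAlgebra.single n c) = _
  rw [AddMonoidAlgebra.liftNC_single]
  simp [Units.val_zpow_eq_zpow_val]

lemma laurentEval_single (n : ℤ) (c : ℚ) (q : ℚ) :
    laurentEval (AddMonoidAlgebra.single n c) q = c * q ^ n := by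
  unfold laurentEval
  rw [AddMonoidAlgebra.coeff_single, Finsupp.sum_single_index (by simp)]

lemma levalHom_eq (u : ℚˣ) (f : LaurentPolynomial ℚ) :
    levalHom u f = laurentEval f (u : ℚ) := by
  induction f using AddMonoidAlgebra.induction_linear with
  | zero => simp [laurentEval]
  | add f g hf hg =>
    rw [map_add, hf, hg]
    unfold laurentEval
    rw [AddMonoidAlgebra.coeff_add, Finsupp.sum_add_index (by simp) (by intro a _ b1 b2; rw [add_mul])]
  | single n c => rw [levalHom_single, laurentEval_single]

lemma levalHom_T (u : ℚˣ) (n : ℤ) : levalHom u (LaurentPolynomial.T n) = (u : ℚ) ^ n := by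
  rw [show LaurentPolynomial.T n = (AddMonoidAlgebra.single n 1 : LaurentPolynomial ℚ) from rfl,
    levalHom_single, one_mul]

lemma levalHom_toLaurent (u : ℚˣ) (p : ℚ[X]) :
    levalHom u (Polynomial.toLaurent p) = p.eval (u : ℚ) := by
  have key : (levalHom u).comp (Polynomial.toLaurent (R := ℚ))
      = Polynomial.evalRingHom (u : ℚ) := by
    apply Polynomial.ringHom_ext
    · intro a
      simp only [RingHom.coe_comp, Function.comp_apply, Polynomial.toLaurent_C,
        coe_evalRingHom, eval_C]
      rw [show (LaurentPolynomial.C a : LaurentPolynomial ℚ) = AddMonoidAlgebra.single 0 a from rfl,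
        levalHom_single]
      simp
    · simp only [RingHom.coe_comp, Function.comp_apply, Polynomial.toLaurent_X,
        coe_evalRingHom, eval_X]
      rw [levalHom_T]
      simp
  exact RingHom.congr_fun key p

lemma dvd_aux {B a k z : ℤ} {m : ℕ} (hB : B ≠ 0) (hk : k ≠ 0) (ha : a ≠ 0)
    (hE : a * k ^ m = B * z) : B ∣ k ^ B.natAbs * a := by
  have hz : z ≠ 0 := by
    rintro rfl
    rw [mul_zero] at hE
    rcases mul_eq_zero.mp hE with h | h
    · exact ha h
    · exact pow_ne_zero m hk h
  rw [← Int.natAbs_dvd_natAbs, Int.natAbs_mul, Int.natAbs_pow]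
  set N := B.natAbs with hNdef
  set A := a.natAbs
  set K := k.natAbs
  have hN : N ≠ 0 := Int.natAbs_ne_zero.mpr hB
  have hA : A ≠ 0 := Int.natAbs_ne_zero.mpr ha
  have hK : K ≠ 0 := Int.natAbs_ne_zero.mpr hk
  have hZ : z.natAbs ≠ 0 := Int.natAbs_ne_zero.mpr hz
  have hE' : A * K ^ m = N * z.natAbs := by
    have := congrArg Int.natAbs hE
    simpa [Int.natAbs_mul, Int.natAbs_pow] using this
  rw [← Nat.factorization_le_iff_dvd hN (mul_ne_zero (pow_ne_zero _ hK) hA)]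
  rw [Finsupp.le_def]
  intro ℓ
  by_cases hp : ℓ.Prime
  · have hKNA : (K ^ N * A).factorization ℓ = N * K.factorization ℓ + A.factorization ℓ := by
      rw [Nat.factorization_mul (pow_ne_zero _ hK) hA, Nat.factorization_pow]
      simp
    by_cases hdvd : ℓ ∣ K
    · have h1 : N.factorization ℓ < N := Nat.factorization_lt ℓ hN
      have h2 : 0 < K.factorization ℓ := hp.factorization_pos_of_dvd hK hdvd
      rw [hKNA]
      nlinarith
    · have hKf : K.factorization ℓ = 0 := Nat.factorization_eq_zero_of_not_dvd hdvd
      have hAf : N.factorization ℓ ≤ A.factorization ℓ := by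
        have h3 := congrArg (fun t => Nat.factorization t ℓ) hE'
        simp only [Nat.factorization_mul hA (pow_ne_zero _ hK),
          Nat.factorization_mul hN hZ, Nat.factorization_pow, Finsupp.add_apply,
          Finsupp.smul_apply, smul_eq_mul, hKf, mul_zero, add_zero] at h3
        omega
      rw [hKNA]
      omega
  · simp [Nat.factorization_eq_zero_of_not_prime _ hp]

/-- If a Laurent polynomial `h ∈ ℚ[w,w⁻¹]` satisfies `h(k) ∈ ℤ[1/k]` for every nonzero
integer `k`, then some `wᵐ·h(w)` is a `ℤ`-linear combination of the binomial polynomials. -/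
theorem laurent_int_loc_valued_is_comb_of_binomials (h : LaurentPolynomial ℚ)
    (hk : ∀ k : ℤ, k ≠ 0 → ∃ (z : ℤ) (m : ℕ), laurentEval h (k : ℚ) = (z : ℚ) / (k : ℚ) ^ m) :
    ∃ (m : ℕ) (c : ℕ →₀ ℤ),
      LaurentPolynomial.T (m : ℤ) * h =
        Polynomial.toLaurent (c.sum fun i z => z • binomialPoly i) := by
  obtain ⟨n, p, hp⟩ := LaurentPolynomial.exists_T_pow h
  obtain ⟨b, hbmap⟩ :=
    IsLocalization.integerNormalization_map_to_map (nonZeroDivisors ℤ) p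
  set P0 := IsLocalization.integerNormalization (nonZeroDivisors ℤ) p with hP0def
  have hB : (b : ℤ) ≠ 0 := nonZeroDivisors.coe_ne_zero b
  set N := (b : ℤ).natAbs with hNdef
  have hN : N ≠ 0 := Int.natAbs_ne_zero.mpr hB
  have key : ∀ k : ℤ, ((P0.eval k : ℤ) : ℚ) = ((b : ℤ) : ℚ) * p.eval (k : ℚ) := by
    intro k
    have h1 := Polynomial.eval₂_at_apply (algebraMap ℤ ℚ) k (p := P0)
    rw [← Polynomial.eval_map, hbmap] at h1
    simp only [algebraMap_int_eq, eq_intCast] at h1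
    rw [← h1]
    simp [zsmul_eq_mul]
  have hvalk : ∀ k : ℤ, k ≠ 0 →
      p.eval (k : ℚ) = laurentEval h (k : ℚ) * (k : ℚ) ^ (n : ℤ) := by
    intro k hk0
    have hkq : ((k : ℚ)) ≠ 0 := Int.cast_ne_zero.mpr hk0
    set u := Units.mk0 (k : ℚ) hkq with hu
    have hcast : (u : ℚ) = (k : ℚ) := rfl
    have := congrArg (levalHom u) hp
    rw [levalHom_toLaurent, map_mul, levalHom_T, levalHom_eq, hcast] at this
    exact this
  set q : ℚ[X] := X ^ N * p with hqdef
  have hqv : ∀ k : ℤ, ∃ cz : ℤ, q.eval (k : ℚ) = cz := by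
    intro k
    by_cases hk0 : k = 0
    · refine ⟨0, ?_⟩
      subst hk0
      simp [hqdef, zero_pow hN]
    · obtain ⟨z, m, hzm⟩ := hk k hk0
      have hkq : ((k : ℚ)) ≠ 0 := Int.cast_ne_zero.mpr hk0
      have hpe : p.eval (k : ℚ) = ((z * k ^ n : ℤ) : ℚ) / (k : ℚ) ^ m := by
        rw [hvalk k hk0, hzm]
        rw [zpow_natCast]
        push_cast
        ring
      by_cases hpz : p.eval (k : ℚ) = 0
      · refine ⟨0, ?_⟩
        simp [hqdef, eval_mul, hpz]
      · set a : ℤ := P0.eval k with hadef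
        have ha : ((a : ℤ) : ℚ) = ((b : ℤ) : ℚ) * p.eval (k : ℚ) := key k
        have haz : a ≠ 0 := by
          intro h0
          rw [h0] at ha
          simp only [Int.cast_zero] at ha
          rcases mul_eq_zero.mp ha.symm with h | h
          · exact hB (by exact_mod_cast h)
          · exact hpz h
        have hE : a * k ^ m = (b : ℤ) * (z * k ^ n) := by
          have hq1 : ((a * k ^ m : ℤ) : ℚ) = (((b : ℤ) * (z * k ^ n) : ℤ) : ℚ) := by
            push_cast
            rw [ha, hpe]
            push_cast
            field_simp
          exact_mod_cast hq1
        obtain ⟨c0, hc0⟩ := dvd_aux hB hk0 haz hE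
        refine ⟨c0, ?_⟩
        have hbq : (((b : ℤ)) : ℚ) ≠ 0 := Int.cast_ne_zero.mpr hB
        have hmain : ((k : ℚ)) ^ N * p.eval (k : ℚ) = (c0 : ℚ) := by
          have hcast : ((k ^ N * a : ℤ) : ℚ) = (((b : ℤ) * c0 : ℤ) : ℚ) := by
            exact_mod_cast congrArg (fun t => ((t : ℤ) : ℚ)) hc0
          push_cast at hcast
          have hpeval : p.eval (k : ℚ) = (a : ℚ) / ((b : ℤ) : ℚ) := by
            rw [eq_div_iff hbq]
            rw [ha]; ring
          rw [hpeval]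
          field_simp
          linear_combination hcast
        simp only [hqdef, eval_mul, eval_pow, eval_X]
        exact hmain
  obtain ⟨c, hcq⟩ := intval_rep q.natDegree q le_rfl hqv
  refine ⟨N + n, c, ?_⟩
  rw [← hcq]
  rw [hqdef, map_mul, Polynomial.toLaurent_X_pow, hp]
  have hT : (LaurentPolynomial.T (((N + n : ℕ) : ℤ)) : LaurentPolynomial ℚ) =
      LaurentPolynomial.T (N : ℤ) * LaurentPolynomial.T (n : ℤ) := by
    rw [← LaurentPolynomial.T_add]
    push_cast
    ring_nf
  rw [hT]
  ring
end

section
/- Let f(u,v) ∈ ℚ[u,v,u⁻¹,v⁻¹] be a homogeneous Laurent polynomial of degree r such that f(t, kt) ∈ ℤ[t, t⁻¹, 1/k] for all nonzero integers k. Then f(u,v) is a ℤ[u,u⁻¹,v⁻¹]-linear combination of the polynomials p_i(u,v) = (1/i!)·v(v-u)(v-2u)⋯(v-(i-1)u), i ≥ 1, together with 1. -/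
/-- The ring of two-variable Laurent polynomials `ℚ[u,v,u⁻¹,v⁻¹]`,
modeled as the monoid algebra of `ℤ × ℤ` over `ℚ` (exponents of `u` and `v`). -/
abbrev LaurentTwo : Type := AddMonoidAlgebra ℚ (ℤ × ℤ)

/-- The variable `u`. -/
noncomputable def uVar : LaurentTwo := AddMonoidAlgebra.single ((1 : ℤ), (0 : ℤ)) 1

/-- The variable `v`. -/
noncomputable def vVar : LaurentTwo := AddMonoidAlgebra.single ((0 : ℤ), (1 : ℤ)) 1

/-- `p_i(u,v) = (1/i!)·v(v-u)(v-2u)⋯(v-(i-1)u)`; note `p_0 = 1`. -/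
noncomputable def pPoly (i : ℕ) : LaurentTwo :=
  (i.factorial : ℚ)⁻¹ • ∏ j ∈ Finset.range i, (vVar - (j : ℚ) • uVar)

/-- The coefficient of `tⁿ` in `f(t, kt)`, for `f ∈ ℚ[u,v,u⁻¹,v⁻¹]`. -/
noncomputable def substCoeff (f : LaurentTwo) (k : ℤ) (n : ℤ) : ℚ :=
  Finsupp.sum f.coeff fun ab c => if ab.1 + ab.2 = n then c * (k : ℚ) ^ ab.2 else 0

/-- `f(t,kt) ∈ ℤ[t,t⁻¹,1/k]` for all nonzero integers `k`: every coefficient of the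
Laurent polynomial `f(t,kt)` lies in `ℤ[1/k]`. -/
def MemW (f : LaurentTwo) : Prop :=
  ∀ k : ℤ, k ≠ 0 → ∀ n : ℤ, ∃ (z : ℤ) (m : ℕ), substCoeff f k n = (z : ℚ) / (k : ℚ) ^ m

/-- An element of `ℚ[u,v,u⁻¹,v⁻¹]` lies in `ℤ[u,u⁻¹,v⁻¹]` iff its coefficients are
integers and all exponents of `v` are nonpositive. -/
def MemZuv (g : LaurentTwo) : Prop :=
  ∀ ab ∈ g.coeff.support, (∃ z : ℤ, g.coeff ab = (z : ℚ)) ∧ ab.2 ≤ 0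

open Finset Polynomial

lemma substCoeff_zero (k n) : substCoeff 0 k n = 0 := Finsupp.sum_zero_index

lemma substCoeff_add (F G : LaurentTwo) (k n) :
    substCoeff (F + G) k n = substCoeff F k n + substCoeff G k n := by
  unfold substCoeff
  rw [AddMonoidAlgebra.coeff_add]
  apply Finsupp.sum_add_index <;> intros <;> simp [add_mul, ite_add_ite]

lemma substCoeff_single (ab : ℤ × ℤ) (c : ℚ) (k n) :
    substCoeff (AddMonoidAlgebra.single ab c) k n = if ab.1 + ab.2 = n then c * (k : ℚ) ^ ab.2 else 0 := by
  unfold substCoeff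
  rw [AddMonoidAlgebra.coeff_single]
  apply Finsupp.sum_single_index
  simp

lemma substCoeff_smul (q : ℚ) (F : LaurentTwo) (k n) :
    substCoeff (q • F) k n = q * substCoeff F k n := by
  unfold substCoeff
  rw [AddMonoidAlgebra.coeff_smul, Finsupp.sum_smul_index' (by simp)]
  rw [Finsupp.mul_sum]
  congr 1; ext ab c
  simp only [smul_eq_mul, mul_ite, mul_zero, mul_assoc]

lemma substCoeff_neg (F : LaurentTwo) (k n) : substCoeff (-F) k n = -substCoeff F k n := by
  have := substCoeff_smul (-1) F k n
  simpa using this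

lemma substCoeff_sub (F G : LaurentTwo) (k n) :
    substCoeff (F - G) k n = substCoeff F k n - substCoeff G k n := by
  rw [sub_eq_add_neg, substCoeff_add, substCoeff_neg, sub_eq_add_neg]

lemma substCoeff_sum {ι : Type*} (s : Finset ι) (F : ι → LaurentTwo) (k n) :
    substCoeff (∑ i ∈ s, F i) k n = ∑ i ∈ s, substCoeff (F i) k n := by
  induction s using Finset.cons_induction with
  | empty => simp [substCoeff_zero]
  | cons i s hi ih => rw [Finset.sum_cons, substCoeff_add, ih, Finset.sum_cons]

lemma substCoeff_single_mul (a b : ℤ) (z : ℚ) (F : LaurentTwo) {k : ℤ} (hk : k ≠ 0) (n : ℤ) :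
    substCoeff (AddMonoidAlgebra.single (a, b) z * F) k n
      = z * (k : ℚ) ^ b * substCoeff F k (n - a - b) := by
  have hkq : (k : ℚ) ≠ 0 := Int.cast_ne_zero.mpr hk
  induction F using AddMonoidAlgebra.induction_linear with
  | zero => simp [substCoeff_zero]
  | add F G hF hG => rw [mul_add, substCoeff_add, hF, hG, substCoeff_add]; ring
  | single ab c =>
      rw [AddMonoidAlgebra.single_mul_single, substCoeff_single, substCoeff_single]
      obtain ⟨a', b'⟩ := ab
      simp only [Prod.mk_add_mk]
      by_cases h : a' + b' = n - a - b
      · rw [if_pos h, if_pos (by omega), zpow_add₀ hkq]; ring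
      · rw [if_neg h, if_neg (by omega)]; ring

lemma uVar_def : uVar = AddMonoidAlgebra.single ((1:ℤ), (0:ℤ)) 1 := rfl
lemma vVar_def : vVar = AddMonoidAlgebra.single ((0:ℤ), (1:ℤ)) 1 := rfl

lemma substCoeff_vu_mul (q : ℚ) (F : LaurentTwo) {k : ℤ} (hk : k ≠ 0) (n : ℤ) :
    substCoeff ((vVar - q • uVar) * F) k n = ((k : ℚ) - q) * substCoeff F k (n - 1) := by
  rw [sub_mul, smul_mul_assoc, substCoeff_sub, substCoeff_smul, vVar_def, uVar_def,
    substCoeff_single_mul _ _ _ _ hk, substCoeff_single_mul _ _ _ _ hk]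
  have h1 : n - 0 - 1 = n - 1 := by ring
  have h2 : n - 1 - 0 = n - 1 := by ring
  rw [h1, h2, zpow_one, zpow_zero]
  ring

lemma substCoeff_prodP (i : ℕ) {k : ℤ} (hk : k ≠ 0) (n : ℤ) :
    substCoeff (∏ j ∈ Finset.range i, (vVar - (j : ℚ) • uVar)) k n
      = if n = (i : ℤ) then ∏ j ∈ Finset.range i, ((k : ℚ) - j) else 0 := by
  induction i generalizing n with
  | zero =>
      simp only [Finset.range_zero, Finset.prod_empty]
      rw [show (1 : LaurentTwo) = AddMonoidAlgebra.single ((0:ℤ),(0:ℤ)) 1 from rfl,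
        substCoeff_single]
      simp [eq_comm]
  | succ i ih =>
      rw [Finset.prod_range_succ, mul_comm, substCoeff_vu_mul _ _ hk, ih]
      by_cases h : n = ((i : ℤ) + 1)
      · rw [if_pos (by omega), if_pos (by push_cast; omega), Finset.prod_range_succ]; ring
      · rw [if_neg (by omega), if_neg (by push_cast; omega), mul_zero]

lemma substCoeff_pPoly (i : ℕ) {k : ℤ} (hk : k ≠ 0) (n : ℤ) :
    substCoeff (pPoly i) k n
      = if n = (i : ℤ) then (i.factorial : ℚ)⁻¹ * ∏ j ∈ Finset.range i, ((k : ℚ) - j) else 0 := by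
  rw [pPoly, substCoeff_smul, substCoeff_prodP i hk]
  split <;> simp

-- homogeneity
lemma hom_mul {F G : LaurentTwo} {r s : ℤ}
    (hF : ∀ ab ∈ F.coeff.support, ab.1 + ab.2 = r) (hG : ∀ ab ∈ G.coeff.support, ab.1 + ab.2 = s) :
    ∀ ab ∈ (F * G).coeff.support, ab.1 + ab.2 = r + s := by
  intro ab hab
  have := AddMonoidAlgebra.support_coeff_mul_subset F G hab
  rw [Finset.mem_add] at this
  obtain ⟨x, hx, y, hy, hxy⟩ := this
  have h1 := hF x hx
  have h2 := hG y hy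
  have : ab = x + y := hxy.symm
  subst this
  simp only [Prod.fst_add, Prod.snd_add]
  omega

lemma hom_single (a b : ℤ) (z : ℚ) :
    ∀ ab ∈ (AddMonoidAlgebra.single ((a, b) : ℤ × ℤ) z).coeff.support, ab.1 + ab.2 = a + b := by
  intro ab hab
  have := Finsupp.support_single_subset hab
  simp only [Finset.mem_singleton] at this
  subst this; rfl

lemma hom_smul {F : LaurentTwo} {r : ℤ} (q : ℚ) (hF : ∀ ab ∈ F.coeff.support, ab.1 + ab.2 = r) :
    ∀ ab ∈ (q • F).coeff.support, ab.1 + ab.2 = r :=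
  fun ab hab => hF ab (Finsupp.support_smul hab)

lemma hom_pPoly (i : ℕ) : ∀ ab ∈ (pPoly i).coeff.support, ab.1 + ab.2 = (i : ℤ) := by
  rw [pPoly]
  apply hom_smul
  induction i with
  | zero =>
      rw [Finset.range_zero, Finset.prod_empty]
      rw [show (1 : LaurentTwo) = AddMonoidAlgebra.single ((0:ℤ),(0:ℤ)) 1 from rfl]
      exact hom_single 0 0 1
  | succ i ih =>
      rw [Finset.prod_range_succ]
      intro ab hab
      have := hom_mul ih (r := (i:ℤ)) (s := 1) ?_ ab hab
      · push_cast; omega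
      · intro ab hab
        have h1 : (vVar - (i:ℚ) • uVar) = AddMonoidAlgebra.single ((0,1) : ℤ×ℤ) 1
            + AddMonoidAlgebra.single ((1,0) : ℤ×ℤ) (-(i:ℚ)) := by
          rw [vVar_def, uVar_def, AddMonoidAlgebra.smul_single]
          rw [sub_eq_add_neg, ← AddMonoidAlgebra.single_neg]
          norm_num
        rw [h1] at hab
        have := Finsupp.support_add hab
        rw [Finset.mem_union] at this
        rcases this with h | h
        · have := Finsupp.support_single_subset h
          simp only [Finset.mem_singleton] at this; subst this; rfl
        · have := Finsupp.support_single_subset h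
          simp only [Finset.mem_singleton] at this; subst this; rfl

lemma hom_sub {F G : LaurentTwo} {r : ℤ}
    (hF : ∀ ab ∈ F.coeff.support, ab.1 + ab.2 = r) (hG : ∀ ab ∈ G.coeff.support, ab.1 + ab.2 = r) :
    ∀ ab ∈ (F - G).coeff.support, ab.1 + ab.2 = r := by
  intro ab hab
  have := Finsupp.support_sub (ι := ℤ×ℤ) (f := F.coeff) (g := G.coeff) hab
  rw [Finset.mem_union] at this
  rcases this with h | h
  · exact hF ab h
  · exact hG ab h

lemma hom_sum {ι : Type*} (s : Finset ι) (F : ι → LaurentTwo) {r : ℤ}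
    (h : ∀ i ∈ s, ∀ ab ∈ (F i).coeff.support, ab.1 + ab.2 = r) :
    ∀ ab ∈ (∑ i ∈ s, F i).coeff.support, ab.1 + ab.2 = r := by
  induction s using Finset.cons_induction with
  | empty => simp
  | cons i s hi ih =>
      rw [Finset.sum_cons]
      intro ab hab
      have := Finsupp.support_add (ι := ℤ×ℤ) hab
      rw [Finset.mem_union] at this
      rcases this with hh | hh
      · exact h i (Finset.mem_cons_self i s) ab hh
      · exact ih (fun j hj => h j (Finset.mem_cons.mpr (Or.inr hj))) ab hh

-- the associated one-variable polynomial
noncomputable def assocPoly (F : LaurentTwo) (J : ℕ) : Polynomial ℚ :=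
  ∑ ab ∈ F.coeff.support, Polynomial.C (F.coeff ab) * Polynomial.X ^ (ab.2 + J).toNat

lemma assocPoly_eval (F : LaurentTwo) (r : ℤ) (hhom : ∀ ab ∈ F.coeff.support, ab.1 + ab.2 = r)
    (J : ℕ) (hJ : ∀ ab ∈ F.coeff.support, 0 ≤ ab.2 + J) {k : ℤ} (hk : k ≠ 0) :
    (assocPoly F J).eval (k : ℚ) = (k : ℚ) ^ (J : ℕ) * substCoeff F k r := by
  have hkq : (k : ℚ) ≠ 0 := Int.cast_ne_zero.mpr hk
  rw [assocPoly, Polynomial.eval_finset_sum]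
  have : substCoeff F k r = ∑ ab ∈ F.coeff.support, F.coeff ab * (k : ℚ) ^ ab.2 := by
    rw [substCoeff, Finsupp.sum]
    apply Finset.sum_congr rfl
    intro ab hab
    rw [if_pos (hhom ab hab)]
  rw [this, Finset.mul_sum]
  apply Finset.sum_congr rfl
  intro ab hab
  rw [Polynomial.eval_mul, Polynomial.eval_C, Polynomial.eval_pow, Polynomial.eval_X]
  have h1 : ((k:ℚ)) ^ (ab.2 + J).toNat = (k:ℚ) ^ ((ab.2 + J : ℤ)) := by
    rw [← zpow_natCast, Int.toNat_of_nonneg (hJ ab hab)]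
  rw [h1, zpow_add₀ hkq, zpow_natCast]
  ring

lemma toNat_le_sup (F : LaurentTwo) (ab : ℤ × ℤ) (hab : ab ∈ F.coeff.support) :
    0 ≤ ab.2 + (F.coeff.support.sup fun ab => (-ab.2).toNat : ℕ) := by
  have h1 : (-ab.2).toNat ≤ F.coeff.support.sup fun ab => (-ab.2).toNat :=
    Finset.le_sup (f := fun ab : ℤ × ℤ => (-ab.2).toNat) hab
  have h2 : -ab.2 ≤ ((-ab.2).toNat : ℤ) := Int.self_le_toNat _
  omega

lemma hom_eq_zero (F : LaurentTwo) (r : ℤ) (hhom : ∀ ab ∈ F.coeff.support, ab.1 + ab.2 = r)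
    (h0 : ∀ k : ℤ, k ≠ 0 → substCoeff F k r = 0) : F = 0 := by
  set J : ℕ := F.coeff.support.sup fun ab => (-ab.2).toNat with hJdef
  have hJ : ∀ ab ∈ F.coeff.support, 0 ≤ ab.2 + J := fun ab hab => toNat_le_sup F ab hab
  have hP : assocPoly F J = 0 := by
    apply Polynomial.eq_zero_of_infinite_isRoot
    apply Set.infinite_of_injective_forall_mem
      (f := fun m : ℕ => ((m : ℚ) + 1))
    · intro a b hab
      simpa using hab
    · intro m
      simp only [Set.mem_setOf_eq, Polynomial.IsRoot]
      have hm : ((m : ℤ) + 1) ≠ 0 := by positivity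
      have := assocPoly_eval F r hhom J hJ hm
      rw [h0 _ hm, mul_zero] at this
      rw [show ((m:ℚ) + 1) = (((m : ℤ) + 1 : ℤ) : ℚ) by push_cast; ring]
      exact this
  ext ab
  by_contra hne
  have hab : ab ∈ F.coeff.support := Finsupp.mem_support_iff.mpr (by simpa using hne)
  have hcoeff : (assocPoly F J).coeff ((ab.2 + J).toNat) = F.coeff ab := by
    rw [assocPoly, Polynomial.finset_sum_coeff]
    rw [Finset.sum_eq_single ab]
    · rw [Polynomial.coeff_C_mul, Polynomial.coeff_X_pow, if_pos rfl, mul_one]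
    · intro ab' hab' hne'
      rw [Polynomial.coeff_C_mul, Polynomial.coeff_X_pow]
      rw [if_neg, mul_zero]
      intro heq
      apply hne'
      have e1 : 0 ≤ ab.2 + J := hJ ab hab
      have e2 : 0 ≤ ab'.2 + J := hJ ab' hab'
      have : ab'.2 = ab.2 := by omega
      have h1 := hhom ab hab
      have h2 := hhom ab' hab'
      have : ab'.1 = ab.1 := by omega
      exact Prod.ext this ‹ab'.2 = ab.2›
    · intro h; exact absurd hab h
  rw [hP] at hcoeff
  simp only [Polynomial.coeff_zero] at hcoeff
  exact hne (by simp [hcoeff.symm])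

-- clearing denominators
lemma rat_mul_int_of_den_dvd (q : ℚ) (n : ℕ) (h : q.den ∣ n) : ∃ z : ℤ, (n : ℚ) * q = z := by
  obtain ⟨c, hc⟩ := h
  refine ⟨c * q.num, ?_⟩
  have hden : (q.den : ℚ) * q = q.num := by rw [mul_comm, Rat.mul_den_eq_num]
  subst hc
  push_cast
  rw [mul_comm (q.den : ℚ) (c : ℚ), mul_assoc, hden]

lemma den_dvd_of_mul_int (q : ℚ) (n : ℤ) (hn : n ≠ 0) (h : ∃ w : ℤ, (n : ℚ) * q = w) :
    (q.den : ℤ) ∣ n := by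
  obtain ⟨w, hw⟩ := h
  have hq : q = (w : ℚ) / (n : ℚ) := by
    field_simp at hw ⊢
    linarith [hw]
  have := Rat.den_dvd w n
  rwa [Rat.divInt_eq_div, ← hq] at this

lemma nat_dvd_pow_of_dvd_pow_of_le {d a m N : ℕ} (hd : d ≠ 0) (ha : a ≠ 0)
    (h : d ∣ a ^ m) (hdN : d ≤ N) : d ∣ a ^ N := by
  rcases Nat.eq_zero_or_pos N with hN | hN
  · omega
  have haN : a ^ N ≠ 0 := pow_ne_zero _ ha
  rw [← Nat.factorization_le_iff_dvd hd haN]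
  intro p
  rcases Nat.eq_zero_or_pos (d.factorization p) with h0 | h0
  · simp [h0]
  · have hp : p.Prime := Nat.prime_of_mem_primeFactors (by
      rw [← Nat.support_factorization]
      exact Finsupp.mem_support_iff.mpr h0.ne')
    have hpd : p ∣ d := Nat.dvd_of_factorization_pos h0.ne'
    have hpa : p ∣ a := hp.dvd_of_dvd_pow (hpd.trans h)
    have h1 : d.factorization p < d := Nat.factorization_lt p hd
    have h2 : 1 ≤ a.factorization p := by
      rw [← Nat.Prime.pow_dvd_iff_le_factorization hp ha, pow_one]; exact hpa
    calc d.factorization p ≤ N := by omega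
      _ ≤ N * a.factorization p := Nat.le_mul_of_pos_right _ (by omega)
      _ = (a ^ N).factorization p := by rw [Nat.factorization_pow]; simp

lemma key_pow_mul_int (q : ℚ) (k : ℤ) (hk : k ≠ 0) (D : ℕ) (hD : D ≠ 0)
    (h1 : ∃ (z : ℤ) (m : ℕ), q = (z : ℚ) / (k : ℚ) ^ m)
    (h2 : ∃ w : ℤ, (D : ℚ) * q = w) :
    ∃ y : ℤ, ((k : ℚ)) ^ D * q = y := by
  have hkq : (k : ℚ) ≠ 0 := Int.cast_ne_zero.mpr hk
  obtain ⟨z, m, hzm⟩ := h1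
  -- q.den ∣ k.natAbs ^ m
  have hm : ∃ w : ℤ, ((k ^ m : ℤ) : ℚ) * q = w := by
    refine ⟨z, ?_⟩
    rw [hzm]
    push_cast
    field_simp
  have hden1 : (q.den : ℤ) ∣ k ^ m := den_dvd_of_mul_int q (k ^ m) (pow_ne_zero _ hk) hm
  have hden1' : q.den ∣ k.natAbs ^ m := by
    have := Int.natAbs_dvd_natAbs.mpr hden1
    simpa [Int.natAbs_pow] using this
  have hden2 : (q.den : ℤ) ∣ (D : ℤ) := den_dvd_of_mul_int q D (Int.natCast_ne_zero.mpr hD) (by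
    obtain ⟨w, hw⟩ := h2; exact ⟨w, by push_cast; exact hw⟩)
  have hden2' : q.den ∣ D := Int.ofNat_dvd.mp hden2
  have hdle : q.den ≤ D := Nat.le_of_dvd (Nat.pos_of_ne_zero hD) hden2'
  have hdenD : q.den ∣ k.natAbs ^ D :=
    nat_dvd_pow_of_dvd_pow_of_le q.den_nz (Int.natAbs_ne_zero.mpr hk) hden1' hdle
  obtain ⟨y', hy'⟩ := rat_mul_int_of_den_dvd q (k.natAbs ^ D) hdenD
  rcases le_or_gt 0 k with hsign | hsign
  · refine ⟨y', ?_⟩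
    have h3 : ((k.natAbs : ℚ)) = (k : ℚ) := by
      rw [Nat.cast_natAbs, abs_of_nonneg (by exact_mod_cast hsign)]
    rw [← h3, ← hy']; push_cast; ring
  · refine ⟨(-1) ^ D * y', ?_⟩
    have h3 : (k:ℚ) = -((k.natAbs:ℚ)) := by
      rw [Nat.cast_natAbs, abs_of_neg (by exact_mod_cast hsign)]; push_cast; ring
    rw [h3, neg_pow, mul_assoc,
      show ((k.natAbs:ℚ))^D * q = (y':ℚ) from by rw [← hy']; push_cast; ring]
    push_cast; ring

noncomputable def newtonCoeff (W : ℕ → ℤ) : ℕ → ℤ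
  | m => W m - ∑ i ∈ (Finset.range m).attach, newtonCoeff W i.1 * (m.choose i.1)
decreasing_by exact Finset.mem_range.mp i.2

lemma newtonCoeff_eq (W : ℕ → ℤ) (m : ℕ) :
    newtonCoeff W m = W m - ∑ i ∈ Finset.range m, newtonCoeff W i * (m.choose i) := by
  rw [newtonCoeff]
  congr 1
  exact Finset.sum_attach (Finset.range m) (fun i => newtonCoeff W i * (m.choose i : ℤ))

lemma newton_sum_self (W : ℕ → ℤ) (m : ℕ) :
    ∑ i ∈ Finset.range (m + 1), newtonCoeff W i * (m.choose i) = W m := by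
  rw [Finset.sum_range_succ, newtonCoeff_eq]
  simp

lemma newton_sum (W : ℕ → ℤ) (N m : ℕ) (hm : m ≤ N) :
    ∑ i ∈ Finset.range (N + 1), newtonCoeff W i * (m.choose i) = W m := by
  rw [← newton_sum_self W m]
  symm
  apply Finset.sum_subset
  · intro x hx
    rw [Finset.mem_range] at *
    omega
  · intro x hx hnx
    rw [Finset.mem_range] at hx hnx
    rw [Nat.choose_eq_zero_of_lt (by omega)]; simp

lemma prod_range_cast_eq_descFactorial (m i : ℕ) :
    ∏ j ∈ Finset.range i, ((m : ℚ) - j) = (m.descFactorial i : ℚ) := by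
  induction i with
  | zero => simp
  | succ i ih =>
      rw [Finset.prod_range_succ, ih, Nat.descFactorial_succ]
      rcases le_or_gt i m with h | h
      · push_cast [Nat.cast_sub h]
        ring
      · rw [Nat.descFactorial_eq_zero_iff_lt.mpr h]
        push_cast
        ring

lemma numerical_poly (H : Polynomial ℚ) (hH : ∀ k : ℤ, ∃ w : ℤ, H.eval (k : ℚ) = w) :
    ∃ (N : ℕ) (z : ℕ → ℤ), ∀ k : ℤ, H.eval (k : ℚ)
      = ∑ i ∈ Finset.range (N + 1),
          (z i : ℚ) * ((i.factorial : ℚ)⁻¹ * ∏ j ∈ Finset.range i, ((k : ℚ) - j)) := by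
  classical
  set N := H.natDegree with hN
  set W : ℕ → ℤ := fun m => (hH m).choose with hW
  have hWspec : ∀ m : ℕ, H.eval ((m : ℚ)) = W m := by
    intro m
    have := (hH m).choose_spec
    simpa using this
  set z := newtonCoeff W with hz
  set Ψ : Polynomial ℚ := ∑ i ∈ Finset.range (N + 1),
      Polynomial.C ((z i : ℚ) * (i.factorial : ℚ)⁻¹) *
        ∏ j ∈ Finset.range i, (Polynomial.X - Polynomial.C (j : ℚ)) with hΨ
  have hΨdeg : Ψ.natDegree ≤ N := by
    apply Polynomial.natDegree_sum_le_of_forall_le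
    intro i hi
    refine le_trans (Polynomial.natDegree_C_mul_le _ _) ?_
    refine le_trans (Polynomial.natDegree_prod_le _ _) ?_
    have : ∀ j ∈ Finset.range i, (Polynomial.X - Polynomial.C (j:ℚ)).natDegree = 1 := by
      intro j _; exact Polynomial.natDegree_X_sub_C _
    rw [Finset.sum_congr rfl this]
    simp only [Finset.sum_const, smul_eq_mul, mul_one]
    rw [Finset.card_range]
    rw [Finset.mem_range] at hi
    omega
  have hΨeval : ∀ x : ℚ, Ψ.eval x
      = ∑ i ∈ Finset.range (N + 1),
          (z i : ℚ) * ((i.factorial : ℚ)⁻¹ * ∏ j ∈ Finset.range i, (x - j)) := by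
    intro x
    rw [hΨ, Polynomial.eval_finset_sum]
    apply Finset.sum_congr rfl
    intro i _
    rw [Polynomial.eval_mul, Polynomial.eval_C, Polynomial.eval_prod]
    have : ∀ j ∈ Finset.range i,
        Polynomial.eval x (Polynomial.X - Polynomial.C (j:ℚ)) = x - j := by
      intro j _; simp
    rw [Finset.prod_congr rfl this]
    ring
  have hΨnat : ∀ m : ℕ, m ≤ N → Ψ.eval ((m : ℚ)) = W m := by
    intro m hm
    · rw [hΨeval, ← newton_sum W N m hm]
      push_cast
      apply Finset.sum_congr rfl
      intro i _
      rw [prod_range_cast_eq_descFactorial, Nat.descFactorial_eq_factorial_mul_choose]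
      have : (i.factorial : ℚ) ≠ 0 := by exact_mod_cast i.factorial_ne_zero
      push_cast
      field_simp
      exact mul_comm _ _
  have hHΨ : H = Ψ := by
    have hsub : H - Ψ = 0 := by
      apply Polynomial.eq_zero_of_natDegree_lt_card_of_eval_eq_zero (ι := Fin (N + 1))
        (f := fun i => ((i : ℕ) : ℚ))
      · exact fun a b hab => Fin.ext (Nat.cast_injective hab)
      · intro i
        rw [Polynomial.eval_sub, hWspec i, hΨnat i (by omega), sub_self]
      · rw [Fintype.card_fin]
        have h1 := Polynomial.natDegree_sub_le H Ψ
        have h2 : H.natDegree ≤ N := le_of_eq hN.symm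
        omega
    exact sub_eq_zero.mp hsub
  refine ⟨N, z, fun k => ?_⟩
  rw [hHΨ, hΨeval]

/-- A homogeneous Laurent polynomial `f(u,v)` of degree `r` with `f(t,kt) ∈ ℤ[t,t⁻¹,1/k]`
for all nonzero integers `k` is a `ℤ[u,u⁻¹,v⁻¹]`-linear combination of the `p_i`, `i ≥ 1`,
together with `1 = p_0`. -/
theorem homogeneous_memW_is_comb_of_p (f : LaurentTwo) (r : ℤ)
    (hhom : ∀ ab ∈ f.coeff.support, ab.1 + ab.2 = r) (hf : MemW f) :
    ∃ (N : ℕ) (c : ℕ → LaurentTwo),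
      (∀ i, MemZuv (c i)) ∧ f = ∑ i ∈ Finset.range (N + 1), c i * pPoly i := by
  classical
  set J : ℕ := f.coeff.support.sup (fun ab => (-ab.2).toNat) with hJdef
  have hJ : ∀ ab ∈ f.coeff.support, 0 ≤ ab.2 + J := fun ab hab => toNat_le_sup f ab hab
  set h : Polynomial ℚ := assocPoly f J with hh
  have hkey : ∀ k : ℤ, k ≠ 0 → h.eval (k:ℚ) = (k:ℚ) ^ (J:ℕ) * substCoeff f k r :=
    fun k hk => assocPoly_eval f r hhom J hJ hk
  set D : ℕ := ∏ ab ∈ f.coeff.support, (f.coeff ab).den with hDdef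
  have hDne : D ≠ 0 := by
    rw [hDdef]
    exact Finset.prod_ne_zero_iff.mpr (fun ab _ => (f.coeff ab).den_nz)
  set H : Polynomial ℚ := Polynomial.X ^ D * h with hHdef
  have hHeval : ∀ x : ℚ, H.eval x = x ^ D * h.eval x := by
    intro x
    rw [hHdef, Polynomial.eval_mul, Polynomial.eval_pow, Polynomial.eval_X]
  have hHint : ∀ k : ℤ, ∃ w : ℤ, H.eval (k:ℚ) = w := by
    intro k
    by_cases hk : k = 0
    · refine ⟨0, ?_⟩
      subst hk
      rw [hHeval]
      push_cast
      rw [zero_pow hDne]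
      ring
    · have hkq : (k:ℚ) ≠ 0 := Int.cast_ne_zero.mpr hk
      have h1 : ∃ (zz : ℤ) (m : ℕ), h.eval (k:ℚ) = (zz:ℚ)/(k:ℚ)^m := by
        obtain ⟨zz, m, hzm⟩ := hf k hk r
        refine ⟨k ^ J * zz, m, ?_⟩
        rw [hkey k hk, hzm]
        push_cast
        ring
      have h2 : ∃ w : ℤ, (D:ℚ) * h.eval (k:ℚ) = w := by
        rw [hh, assocPoly, Polynomial.eval_finset_sum, Finset.mul_sum]
        have hterm : ∀ ab ∈ f.coeff.support, ∃ w : ℤ,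
            (D:ℚ) * (Polynomial.C (f.coeff ab) * Polynomial.X ^ (ab.2 + J).toNat).eval (k:ℚ) = w := by
          intro ab hab
          obtain ⟨w1, hw1⟩ := rat_mul_int_of_den_dvd (f.coeff ab) D
            (Finset.dvd_prod_of_mem (fun ab => (f.coeff ab).den) hab)
          refine ⟨w1 * k ^ ((ab.2 + J).toNat), ?_⟩
          rw [Polynomial.eval_mul, Polynomial.eval_C, Polynomial.eval_pow, Polynomial.eval_X]
          push_cast
          rw [← hw1]
          ring
        choose w hw using hterm
        refine ⟨∑ ab ∈ f.coeff.support.attach, w ab.1 ab.2, ?_⟩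
        calc ∑ ab ∈ f.coeff.support, (D:ℚ) * (Polynomial.C (f.coeff ab) * Polynomial.X ^ (ab.2 + J).toNat).eval (k:ℚ)
            = ∑ ab ∈ f.coeff.support.attach,
                (D:ℚ) * (Polynomial.C (f.coeff ab.1) * Polynomial.X ^ (ab.1.2 + J).toNat).eval (k:ℚ) :=
              (Finset.sum_attach _ _).symm
          _ = ∑ ab ∈ f.coeff.support.attach, ((w ab.1 ab.2 : ℤ) : ℚ) :=
              Finset.sum_congr rfl (fun ab _ => hw ab.1 ab.2)
          _ = ((∑ ab ∈ f.coeff.support.attach, w ab.1 ab.2 : ℤ) : ℚ) := by push_cast; ring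
      obtain ⟨y, hy⟩ := key_pow_mul_int (h.eval (k:ℚ)) k hk D hDne h1 h2
      exact ⟨y, by rw [hHeval]; exact hy⟩
  obtain ⟨N, z, hz⟩ := numerical_poly H hHint
  set J' : ℕ := D + J with hJ'def
  set c : ℕ → LaurentTwo := fun i =>
    AddMonoidAlgebra.single ((r + (J' : ℤ) - (i : ℤ), -(J' : ℤ)) : ℤ × ℤ) ((z i : ℚ)) with hc
  refine ⟨N, c, ?_, ?_⟩
  · intro i ab hab
    have hs := Finsupp.support_single_subset hab
    rw [Finset.mem_singleton] at hs
    subst hs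
    constructor
    · exact ⟨z i, by rw [hc]; simp [Finsupp.single_eq_same]⟩
    · simp
  · have main : f - ∑ i ∈ Finset.range (N+1), c i * pPoly i = 0 := by
      apply hom_eq_zero _ r
      · apply hom_sub hhom
        apply hom_sum
        intro i _
        intro ab hab
        have hhh := hom_mul (hom_single (r + (J' : ℤ) - (i : ℤ)) (-(J' : ℤ)) ((z i : ℚ)))
          (hom_pPoly i) ab hab
        omega
      · intro k hk
        have hkq : (k:ℚ) ≠ 0 := Int.cast_ne_zero.mpr hk
        rw [substCoeff_sub, substCoeff_sum]
        have hterm : ∀ i ∈ Finset.range (N+1), substCoeff (c i * pPoly i) k r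
            = (k:ℚ) ^ (-(J':ℤ)) *
              ((z i : ℚ) * ((i.factorial:ℚ)⁻¹ * ∏ j ∈ Finset.range i, ((k:ℚ) - j))) := by
          intro i _
          rw [hc]
          rw [substCoeff_single_mul _ _ _ _ hk]
          have harg : r - (r + (J':ℤ) - (i:ℤ)) - (-(J':ℤ)) = (i:ℤ) := by ring
          rw [harg, substCoeff_pPoly i hk, if_pos rfl]
          ring
        rw [Finset.sum_congr rfl hterm, ← Finset.mul_sum, ← hz k]
        have hfr : substCoeff f k r = (k:ℚ) ^ (-(J':ℤ)) * H.eval (k:ℚ) := by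
          rw [hHeval, hkey k hk, zpow_neg, zpow_natCast, hJ'def, pow_add]
          field_simp
        rw [hfr, sub_self]
    have := sub_eq_zero.mp main
    exact this
end

section
/- Let R be the subring of ℚ[u,v,u⁻¹,v⁻¹] consisting of those Laurent polynomials f(u,v) with f(t,kt) ∈ ℤ[t,t⁻¹,1/k] for all nonzero integers k. Then each p_i(u,v) = (1/i!)·v(v-u)⋯(v-(i-1)u) belongs to R. -/
/-- The monoid hom underlying substitution `u ↦ t`, `v ↦ k·t`. -/
noncomputable def substMonHom (k : ℤ) (hk : k ≠ 0) :
    Multiplicative (ℤ × ℤ) →* AddMonoidAlgebra ℚ ℤ where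
  toFun x := AddMonoidAlgebra.single (x.toAdd.1 + x.toAdd.2) ((k : ℚ) ^ x.toAdd.2)
  map_one' := by
    show AddMonoidAlgebra.single ((0 : ℤ) + (0 : ℤ)) ((k : ℚ) ^ (0 : ℤ)) = 1
    rw [zpow_zero, add_zero]
    exact AddMonoidAlgebra.one_def.symm
  map_mul' x y := by
    have hk' : (k : ℚ) ≠ 0 := Int.cast_ne_zero.mpr hk
    show AddMonoidAlgebra.single ((x.toAdd + y.toAdd).1 + (x.toAdd + y.toAdd).2)
        ((k : ℚ) ^ (x.toAdd + y.toAdd).2) = _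
    rw [AddMonoidAlgebra.single_mul_single]
    simp only [Prod.fst_add, Prod.snd_add]
    rw [zpow_add₀ hk']
    congr 1
    ring

/-- The substitution `u ↦ t`, `v ↦ k·t` as an algebra hom. -/
noncomputable def substHom (k : ℤ) (hk : k ≠ 0) :
    LaurentTwo →ₐ[ℚ] AddMonoidAlgebra ℚ ℤ :=
  AddMonoidAlgebra.lift ℚ (AddMonoidAlgebra ℚ ℤ) (ℤ × ℤ) (substMonHom k hk)

theorem substCoeff_eq (k : ℤ) (hk : k ≠ 0) (f : LaurentTwo) (n : ℤ) :
    substCoeff f k n = (substHom k hk f).coeff n := by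
  rw [substHom, AddMonoidAlgebra.lift_apply, substCoeff]
  rw [Finsupp.sum, Finsupp.sum, AddMonoidAlgebra.coeff_sum, Finsupp.finset_sum_apply]
  refine Finset.sum_congr rfl fun ab _ => ?_
  rw [AddMonoidAlgebra.coeff_smul_apply]
  show _ = f.coeff ab • (Finsupp.single (ab.1 + ab.2) ((k : ℚ) ^ ab.2)) n
  rw [Finsupp.single_apply]
  split <;> simp [mul_comm]

theorem prod_range_sub_eq_descPochhammer (k : ℤ) (i : ℕ) :
    ∏ j ∈ Finset.range i, (k - (j : ℤ)) = (descPochhammer ℤ i).eval k := by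
  induction i with
  | zero => simp
  | succ n ih => rw [Finset.prod_range_succ, ih, descPochhammer_succ_eval]

theorem prod_single_one (s : Finset ℕ) (c : ℕ → ℚ) :
    (∏ j ∈ s, AddMonoidAlgebra.single (1 : ℤ) (c j) : AddMonoidAlgebra ℚ ℤ) =
      AddMonoidAlgebra.single (s.card : ℤ) (∏ j ∈ s, c j) := by
  induction s using Finset.cons_induction with
  | empty =>
    rw [Finset.prod_empty, Finset.prod_empty]
    simp only [Finset.card_empty, Nat.cast_zero]
    exact AddMonoidAlgebra.one_def
  | cons a s ha ih =>
    rw [Finset.prod_cons, ih, AddMonoidAlgebra.single_mul_single, Finset.prod_cons,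
      Finset.card_cons]
    congr 1
    push_cast
    ring

/-- Each `p_i(u,v) = (1/i!)·v(v-u)⋯(v-(i-1)u)` belongs to the subring `R` of
`ℚ[u,v,u⁻¹,v⁻¹]` of Laurent polynomials `f` with `f(t,kt) ∈ ℤ[t,t⁻¹,1/k]` for all
nonzero integers `k`. -/
theorem pPoly_memW (i : ℕ) (hi : 1 ≤ i) : MemW (pPoly i) := by
  intro k hk n
  rw [substCoeff_eq k hk]
  have hu : substHom k hk uVar = AddMonoidAlgebra.single (1 : ℤ) 1 := by
    rw [uVar, substHom, AddMonoidAlgebra.lift_single]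
    show (1 : ℚ) • AddMonoidAlgebra.single ((1 : ℤ) + 0) ((k:ℚ) ^ (0:ℤ)) = _
    simp
  have hv : substHom k hk vVar = AddMonoidAlgebra.single (1 : ℤ) (k : ℚ) := by
    rw [vVar, substHom, AddMonoidAlgebra.lift_single]
    show (1 : ℚ) • AddMonoidAlgebra.single ((0 : ℤ) + 1) ((k:ℚ) ^ (1:ℤ)) = _
    simp
  have key : substHom k hk (pPoly i) =
      (i.factorial : ℚ)⁻¹ •
        (AddMonoidAlgebra.single (i : ℤ) (∏ j ∈ Finset.range i, ((k : ℚ) - j)) :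
          AddMonoidAlgebra ℚ ℤ) := by
    rw [pPoly, map_smul, map_prod]
    have hfac : ∀ j ∈ Finset.range i, substHom k hk (vVar - (j : ℚ) • uVar) =
        (AddMonoidAlgebra.single (1 : ℤ) ((k : ℚ) - j) : AddMonoidAlgebra ℚ ℤ) := by
      intro j _
      rw [map_sub, map_smul, hu, hv, AddMonoidAlgebra.smul_single, smul_eq_mul, mul_one,
        ← AddMonoidAlgebra.single_sub]
    rw [Finset.prod_congr rfl hfac, prod_single_one, Finset.card_range]
  rw [key, AddMonoidAlgebra.coeff_smul_apply, AddMonoidAlgebra.coeff_single, Finsupp.single_apply]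
  by_cases hn : (i : ℤ) = n
  · rw [if_pos hn]
    obtain ⟨z, hz⟩ : (i.factorial : ℤ) ∣ (descPochhammer ℤ i).eval k := by
      refine ⟨Ring.choose k i, ?_⟩
      rw [Polynomial.eval_eq_smeval, Ring.descPochhammer_eq_factorial_smul_choose]
      simp [nsmul_eq_mul]
    refine ⟨z, 0, ?_⟩
    have hprod : (∏ j ∈ Finset.range i, ((k : ℚ) - j)) = ((i.factorial : ℤ) * z : ℤ) := by
      rw [← hz, ← prod_range_sub_eq_descPochhammer]
      push_cast
      rfl
    rw [smul_eq_mul, hprod, pow_zero, div_one]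
    push_cast
    have hf : (i.factorial : ℚ) ≠ 0 := by exact_mod_cast Nat.factorial_ne_zero i
    field_simp
  · refine ⟨0, 0, ?_⟩
    simp [hn]
end
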